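/- Let f(y|μ,σ) = (2πσ)^{-1/2} exp(-(y-μ)²/(2σ)) be the Gaussian density with mean μ and variance σ. If (μ₁,σ₁),...,(μ_k,σ_k) are pairwise distinct pairs with σⱼ > 0, then the functions y ↦ f(y|μⱼ,σⱼ), j = 1,...,k, are linearly independent over ℝ. -/

import Mathlib

open Real Finset Filter

/-- The univariate Gaussian density with mean `μ` and variance `σ`. -/
noncomputable def gaussPDF (μ σ y : ℝ) : ℝ :=
  (Real.sqrt (2 * Real.pi * σ))⁻¹ * Real.exp (-(y - μ) ^ 2 / (2 * σ))

lemma gaussPDF_pos (μ σ y : ℝ) (hσ : 0 < σ) : 0 < gaussPDF μ σ y := by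
  unfold gaussPDF
  have : 0 < Real.sqrt (2 * Real.pi * σ) := Real.sqrt_pos.2 (by positivity)
  positivity

lemma gauss_ratio_tendsto (μ1 σ1 μ0 σ0 : ℝ) (h1 : 0 < σ1) (h0 : 0 < σ0)
    (hlt : σ1 < σ0 ∨ (σ1 = σ0 ∧ μ1 < μ0)) :
    Tendsto (fun y => gaussPDF μ1 σ1 y / gaussPDF μ0 σ0 y) atTop (nhds 0) := by
  have hEq : ∀ y : ℝ, gaussPDF μ1 σ1 y / gaussPDF μ0 σ0 y
      = (Real.sqrt (2*π*σ0) / Real.sqrt (2*π*σ1)) *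
        Real.exp (-(y-μ1)^2/(2*σ1) - (-(y-μ0)^2/(2*σ0))) := by
    intro y
    unfold gaussPDF
    rw [mul_div_mul_comm, inv_div_inv, Real.exp_sub]
  set a : ℝ := 1/(2*σ0) - 1/(2*σ1) with ha_def
  set b : ℝ := μ1/σ1 - μ0/σ0 with hb_def
  set d : ℝ := μ0^2/(2*σ0) - μ1^2/(2*σ1) with hd_def
  have hE : ∀ y : ℝ, -(y-μ1)^2/(2*σ1) - (-(y-μ0)^2/(2*σ0)) = y * (a * y + b) + d := by
    intro y
    rw [ha_def, hb_def, hd_def]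
    field_simp
    ring
  have hExpo : Tendsto (fun y : ℝ => y * (a * y + b) + d) atTop atBot := by
    rcases hlt with hlt | ⟨heq, hlt⟩
    · have ha : a < 0 := by
        rw [ha_def]
        have : 1/(2*σ0) < 1/(2*σ1) := by
          apply one_div_lt_one_div_of_lt (by linarith) (by linarith)
        linarith
      have h2 : Tendsto (fun y : ℝ => a * y + b) atTop atBot :=
        tendsto_atBot_add_const_right _ b ((tendsto_id).const_mul_atTop_of_neg ha)
      exact tendsto_atBot_add_const_right _ d (tendsto_id.atTop_mul_atBot₀ h2)
    · have ha : a = 0 := by rw [ha_def, heq]; ring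
      have hb : b < 0 := by
        rw [hb_def, heq]
        have : μ1 / σ0 < μ0 / σ0 := by gcongr
        linarith
      simp only [ha, zero_mul, zero_add]
      have h2 : Tendsto (fun y : ℝ => y * b) atTop atBot := by
        simpa [mul_comm] using (tendsto_id (α := ℝ)).const_mul_atTop_of_neg hb
      exact tendsto_atBot_add_const_right _ d h2
  have : Tendsto (fun y : ℝ => Real.exp (-(y-μ1)^2/(2*σ1) - (-(y-μ0)^2/(2*σ0)))) atTop (nhds 0) := by
    have := Real.tendsto_exp_atBot.comp (hExpo)
    refine this.congr fun y => ?_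
    simp [Function.comp, hE y]
  have := this.const_mul (Real.sqrt (2*π*σ0) / Real.sqrt (2*π*σ1))
  simpa [hEq] using this

/-- Gaussian densities with pairwise distinct (mean, variance) pairs are
linearly independent over ℝ. -/
theorem gaussian_linear_independent (k : ℕ) (μ σ : Fin k → ℝ)
    (hσ : ∀ j, 0 < σ j) (hdist : Function.Injective (fun j => (μ j, σ j)))
    (c : Fin k → ℝ)
    (h : ∀ y : ℝ, ∑ j, c j * gaussPDF (μ j) (σ j) y = 0) :
    ∀ j, c j = 0 := by
  by_contra hc
  push_neg at hc
  obtain ⟨j₁, hj₁⟩ := hc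
  set S : Finset (Fin k) := Finset.univ.filter (fun j => c j ≠ 0) with hS_def
  have hS : S.Nonempty := ⟨j₁, by simp [hS_def, hj₁]⟩
  obtain ⟨b, hbS, hbmax⟩ := S.exists_max_image σ hS
  set S' : Finset (Fin k) := S.filter (fun j => σ j = σ b) with hS'_def
  have hS' : S'.Nonempty := ⟨b, by simp [hS'_def, hbS]⟩
  obtain ⟨j₀, hj₀S', hj₀max⟩ := S'.exists_max_image μ hS'
  have hj₀S : j₀ ∈ S := (Finset.mem_filter.1 hj₀S').1
  have hσj₀ : σ j₀ = σ b := (Finset.mem_filter.1 hj₀S').2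
  have hcj₀ : c j₀ ≠ 0 := by
    have := Finset.mem_filter.1 hj₀S; simpa using this.2
  -- each other term's ratio tends to zero
  have key : ∀ j : Fin k, Tendsto
      (fun y => c j * (gaussPDF (μ j) (σ j) y / gaussPDF (μ j₀) (σ j₀) y))
      atTop (nhds (if j = j₀ then c j₀ else 0)) := by
    intro j
    by_cases hjj : j = j₀
    · subst hjj
      simp only [if_pos rfl]
      have : ∀ y : ℝ, c j * (gaussPDF (μ j) (σ j) y / gaussPDF (μ j) (σ j) y) = c j := by
        intro y
        rw [div_self (ne_of_gt (gaussPDF_pos _ _ _ (hσ j))), mul_one]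
      simpa [this] using tendsto_const_nhds (α := ℝ) (x := c j)
    · rw [if_neg hjj]
      by_cases hjS : j ∈ S
      · have hle : σ j ≤ σ j₀ := hσj₀ ▸ hbmax j hjS
        have hlt : σ j < σ j₀ ∨ (σ j = σ j₀ ∧ μ j < μ j₀) := by
          rcases lt_or_eq_of_le hle with hlt | heq
          · exact Or.inl hlt
          · refine Or.inr ⟨heq, ?_⟩
            have hjS' : j ∈ S' := Finset.mem_filter.2 ⟨hjS, heq.trans hσj₀⟩
            have hle' : μ j ≤ μ j₀ := hj₀max j hjS'
            rcases lt_or_eq_of_le hle' with h' | h'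
            · exact h'
            · exact absurd (hdist (by simp [h', heq])) hjj
        have := (gauss_ratio_tendsto (μ j) (σ j) (μ j₀) (σ j₀) (hσ j) (hσ j₀) hlt).const_mul (c j)
        simpa using this
      · have hc0 : c j = 0 := by
          by_contra h'
          exact hjS (Finset.mem_filter.2 ⟨Finset.mem_univ j, h'⟩)
        simpa [hc0] using tendsto_const_nhds (α := ℝ) (x := (0:ℝ))
  have hsum : Tendsto (fun y => ∑ j, c j * (gaussPDF (μ j) (σ j) y / gaussPDF (μ j₀) (σ j₀) y))
      atTop (nhds (∑ j, if j = j₀ then c j₀ else 0)) :=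
    tendsto_finset_sum _ (fun j _ => key j)
  have hval : (∑ j, if j = j₀ then c j₀ else 0) = c j₀ := by simp
  rw [hval] at hsum
  have hzero : ∀ y : ℝ, (∑ j, c j * (gaussPDF (μ j) (σ j) y / gaussPDF (μ j₀) (σ j₀) y)) = 0 := by
    intro y
    have : (∑ j, c j * (gaussPDF (μ j) (σ j) y / gaussPDF (μ j₀) (σ j₀) y))
        = (∑ j, c j * gaussPDF (μ j) (σ j) y) / gaussPDF (μ j₀) (σ j₀) y := by
      rw [Finset.sum_div]
      exact Finset.sum_congr rfl fun j _ => (mul_div_assoc _ _ _).symm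
    rw [this, h y, zero_div]
  have : Tendsto (fun _ : ℝ => (0:ℝ)) atTop (nhds (c j₀)) := by
    refine hsum.congr fun y => hzero y
  exact hcj₀ (tendsto_nhds_unique this tendsto_const_nhds).symm.symm
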